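/- Let labels ℓ₁,…,ℓ_T, weights v₁,v₂ > 0, and suppose the constant solution p_i = ⋯ = p_j = r_{i,j} minimizes Obj_{i,j}(q) = m_{i,j}v₁·C(H₁,q) + n_{i,j}v₂·C(H₂,q) over monotone solutions for every strict RBPSR C. Then for every k with i ≤ k ≤ j: r_{i,k} ≥ r_{i,j} and r_{k,j} ≤ r_{i,j}. -/

import Mathlib

open MeasureTheory

/-- The RBPSR with density `ρ`: `C(H₁,q) = ∫_q^1 ρ(η)/η dη` (label `true`),
`C(H₂,q) = ∫_0^q ρ(η)/(1-η) dη` (label `false`). -/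
noncomputable def Crho (ρ : ℝ → ℝ) : Bool → ℝ → ℝ
  | true,  q => ∫ η in q..1, ρ η / η
  | false, q => ∫ η in (0:ℝ)..q, ρ η / (1 - η)

/-- The weighted proportion `r_{i,j}` of `H₁`-labels (`true`) in positions `i..j`. -/
noncomputable def pavrN (ℓ : ℕ → Bool) (v₁ v₂ : ℝ) (i j : ℕ) : ℝ :=
  (((Finset.Icc i j).filter fun k => ℓ k = true).card * v₁) /
    (((Finset.Icc i j).filter fun k => ℓ k = true).card * v₁ +
     ((Finset.Icc i j).filter fun k => ℓ k = false).card * v₂)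

noncomputable def rho0 : ℝ → ℝ := fun η => 6 * η * (1 - η)

lemma ae_ne0 : ∀ᵐ x : ℝ, x ≠ (0:ℝ) := by
  refine ae_iff.2 ?_; simpa using Real.volume_singleton (a := 0)

lemma ae_ne1 : ∀ᵐ x : ℝ, x ≠ (1:ℝ) := by
  refine ae_iff.2 ?_; simpa using Real.volume_singleton (a := 1)

lemma rho0_div_eta_ae : ∀ᵐ x : ℝ, rho0 x / x = 6 * (1 - x) := by
  filter_upwards [ae_ne0] with x hx
  rw [div_eq_iff hx]; simp only [rho0]; ring

lemma rho0_div_ometa_ae : ∀ᵐ x : ℝ, rho0 x / (1 - x) = 6 * x := by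
  filter_upwards [ae_ne1] with x hx
  have : (1:ℝ) - x ≠ 0 := sub_ne_zero.2 (Ne.symm hx)
  rw [div_eq_iff this]; simp only [rho0]

lemma int1 : IntervalIntegrable (fun η => rho0 η / η) volume 0 1 := by
  have hc : IntervalIntegrable (fun x : ℝ => 6 * (1 - x)) volume 0 1 :=
    (by continuity : Continuous fun x : ℝ => 6 * (1 - x)).intervalIntegrable 0 1
  exact hc.congr_ae (ae_restrict_of_ae (rho0_div_eta_ae.mono fun x hx => hx.symm))

lemma int2 : IntervalIntegrable (fun η => rho0 η / (1 - η)) volume 0 1 := by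
  have hc : IntervalIntegrable (fun x : ℝ => 6 * x) volume 0 1 :=
    (by continuity : Continuous fun x : ℝ => 6 * x).intervalIntegrable 0 1
  exact hc.congr_ae (ae_restrict_of_ae (rho0_div_ometa_ae.mono fun x hx => hx.symm))

lemma integ_lin (a b c d : ℝ) : (∫ x in a..b, (c + d * x)) = c * (b - a) + d * ((b^2 - a^2)/2) := by
  have h1 : IntervalIntegrable (fun _ : ℝ => c) volume a b := intervalIntegrable_const
  have h2 : IntervalIntegrable (fun x : ℝ => d * x) volume a b :=
    (by continuity : Continuous fun x : ℝ => d * x).intervalIntegrable a b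
  rw [intervalIntegral.integral_add h1 h2, intervalIntegral.integral_const,
    intervalIntegral.integral_const_mul, integral_id, smul_eq_mul]
  ring

lemma Ctrue (q : ℝ) : (∫ η in q..1, rho0 η / η) = 3 * (1 - q)^2 := by
  rw [intervalIntegral.integral_congr_ae (rho0_div_eta_ae.mono fun x hx _ => hx)]
  rw [show (fun x : ℝ => 6 * (1 - x)) = fun x : ℝ => 6 + (-6) * x by funext x; ring]
  rw [integ_lin q 1 6 (-6)]; ring

lemma Cfalse (q : ℝ) : (∫ η in (0:ℝ)..q, rho0 η / (1 - η)) = 3 * q^2 := by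
  rw [intervalIntegral.integral_congr_ae (rho0_div_ometa_ae.mono fun x hx _ => hx)]
  rw [show (fun x : ℝ => 6 * x) = fun x : ℝ => 0 + 6 * x by funext x; ring]
  rw [integ_lin 0 q 0 6]; ring

lemma rho0_int : (∫ η in (0:ℝ)..1, rho0 η) = 1 := by
  have h2 : IntervalIntegrable (fun x : ℝ => 6 * x^2) volume 0 1 :=
    (by continuity : Continuous fun x : ℝ => 6 * x^2).intervalIntegrable 0 1
  have h1 : IntervalIntegrable (fun x : ℝ => 6 * x) volume 0 1 :=
    (by continuity : Continuous fun x : ℝ => 6 * x).intervalIntegrable 0 1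
  rw [show rho0 = fun x : ℝ => 6 * x - 6 * x^2 by funext x; simp [rho0]; ring]
  rw [intervalIntegral.integral_sub h1 h2, intervalIntegral.integral_const_mul,
    intervalIntegral.integral_const_mul, integral_id, integral_pow]
  norm_num

lemma rho0_nonneg : ∀ η ∈ Set.Icc (0:ℝ) 1, 0 ≤ rho0 η := by
  rintro η ⟨h0, h1⟩
  have h2 : 0 ≤ 1 - η := by linarith
  exact mul_nonneg (by linarith) h2

lemma rho0_pos_ae : ∀ᵐ η ∂(volume.restrict (Set.Icc (0:ℝ) 1)), 0 < rho0 η := by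
  refine (ae_restrict_iff' measurableSet_Icc).2 ?_
  filter_upwards [ae_ne0, ae_ne1] with x h0 h1 hx
  obtain ⟨hx0, hx1⟩ := hx
  have hx0' : 0 < x := lt_of_le_of_ne hx0 (Ne.symm h0)
  have hx1' : x < 1 := lt_of_le_of_ne hx1 h1
  exact mul_pos (by linarith) (by linarith)

lemma seg_sum_const (ℓ : ℕ → Bool) (v₁ v₂ : ℝ) (S : Finset ℕ) (q : ℝ) :
    (∑ t ∈ S, (if ℓ t then v₁ else v₂) * Crho rho0 (ℓ t) q)
      = ((S.filter fun k => ℓ k = true).card : ℝ) * v₁ * (3*(1-q)^2)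
        + ((S.filter fun k => ℓ k = false).card : ℝ) * v₂ * (3*q^2) := by
  have h : ∀ t ∈ S, (if ℓ t then v₁ else v₂) * Crho rho0 (ℓ t) q
      = (if ℓ t = true then v₁ * (3*(1-q)^2) else v₂ * (3*q^2)) := by
    intro t _
    cases h : ℓ t <;> simp [Crho, h, Ctrue, Cfalse]
  rw [Finset.sum_congr rfl h, Finset.sum_ite, Finset.sum_const, Finset.sum_const]
  simp only [Bool.not_eq_true, nsmul_eq_mul]
  ring

lemma quad_id (a b q r : ℝ) (hr : r * (a + b) = a) :
    a * (3*(1-q)^2) + b * (3*q^2)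
      = (a * (3*(1-r)^2) + b * (3*r^2)) + 3*(a+b)*(q-r)^2 := by
  linear_combination (6*(q - r)) * hr

lemma pavrN_mem (ℓ : ℕ → Bool) {v₁ v₂ : ℝ} (hv₁ : 0 < v₁) (hv₂ : 0 < v₂) (a b : ℕ) :
    pavrN ℓ v₁ v₂ a b ∈ Set.Icc (0:ℝ) 1 := by
  unfold pavrN
  have h1 : (0:ℝ) ≤ (((Finset.Icc a b).filter fun k => ℓ k = true).card : ℝ) * v₁ :=
    mul_nonneg (Nat.cast_nonneg _) hv₁.le
  have h2 : (0:ℝ) ≤ (((Finset.Icc a b).filter fun k => ℓ k = false).card : ℝ) * v₂ :=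
    mul_nonneg (Nat.cast_nonneg _) hv₂.le
  exact ⟨div_nonneg h1 (by linarith), div_le_one_of_le₀ (by linarith) (by linarith)⟩

lemma card_split (ℓ : ℕ → Bool) (S : Finset ℕ) :
    (S.filter fun k => ℓ k = true).card + (S.filter fun k => ℓ k = false).card = S.card := by
  have := Finset.card_filter_add_card_filter_not (s := S) (p := fun k => ℓ k = true)
  simpa [Bool.not_eq_true] using this

lemma pos_comb {v₁ v₂ : ℝ} (hv₁ : 0 < v₁) (hv₂ : 0 < v₂) (m n : ℕ) (h : 1 ≤ m + n) :
    (0:ℝ) < (m:ℝ) * v₁ + (n:ℝ) * v₂ := by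
  rcases Nat.eq_zero_or_pos m with h0 | h0
  · subst h0
    have hn : 1 ≤ (n:ℝ) := by exact_mod_cast (by omega : 1 ≤ n)
    nlinarith
  · have hm : 1 ≤ (m:ℝ) := by exact_mod_cast h0
    have hn : 0 ≤ (n:ℝ) := Nat.cast_nonneg n
    nlinarith


/-- Theorem 2: if the constant solution at `r_{i,j}` minimizes the subproblem objective
over monotone `[0,1]`-valued solutions for every strict RBPSR, then for every
`i ≤ k ≤ j` we have `r_{i,k} ≥ r_{i,j}` and `r_{k,j} ≤ r_{i,j}`. -/
theorem stmt13 (ℓ : ℕ → Bool) (v₁ v₂ : ℝ) (hv₁ : 0 < v₁) (hv₂ : 0 < v₂)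
    (i j : ℕ) (hij : i ≤ j)
    (hopt : ∀ ρ : ℝ → ℝ,
      (∀ η ∈ Set.Icc (0:ℝ) 1, 0 ≤ ρ η) →
      (∀ᵐ η ∂(volume.restrict (Set.Icc (0:ℝ) 1)), 0 < ρ η) →
      (∫ η in (0:ℝ)..1, ρ η) = 1 →
      IntervalIntegrable (fun η => ρ η / η) volume 0 1 →
      IntervalIntegrable (fun η => ρ η / (1 - η)) volume 0 1 →
      ∀ p : ℕ → ℝ, MonotoneOn p (Set.Icc i j) →
        (∀ t ∈ Set.Icc i j, p t ∈ Set.Icc (0:ℝ) 1) →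
        (∑ t ∈ Finset.Icc i j,
            (if ℓ t then v₁ else v₂) * Crho ρ (ℓ t) (pavrN ℓ v₁ v₂ i j)) ≤
          ∑ t ∈ Finset.Icc i j, (if ℓ t then v₁ else v₂) * Crho ρ (ℓ t) (p t)) :
    ∀ k, i ≤ k → k ≤ j →
      pavrN ℓ v₁ v₂ i j ≤ pavrN ℓ v₁ v₂ i k ∧
      pavrN ℓ v₁ v₂ k j ≤ pavrN ℓ v₁ v₂ i j := by

  intro k hik hkj
  constructor
  · -- r ≤ r₁ := pavrN i k
    by_contra hlt
    push_neg at hlt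
    -- hlt : pavrN ℓ v₁ v₂ i k < pavrN ℓ v₁ v₂ i j
    set r : ℝ := pavrN ℓ v₁ v₂ i j with hrdef
    set r1 : ℝ := pavrN ℓ v₁ v₂ i k with hr1def
    set p : ℕ → ℝ := fun t => if t ≤ k then r1 else r with hp
    have hmono : MonotoneOn p (Set.Icc i j) := by
      intro s _ t _ hst
      by_cases h1 : s ≤ k <;> by_cases h2 : t ≤ k <;>
        simp only [hp, h1, h2, if_true, if_false]
      · exact le_refl _
      · exact hlt.le
      · exact absurd (hst.trans h2) h1
      · exact le_refl _
    have hmem : ∀ t ∈ Set.Icc i j, p t ∈ Set.Icc (0:ℝ) 1 := by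
      intro t _
      by_cases h : t ≤ k <;> simp only [hp, h, if_true, if_false] <;>
        [exact pavrN_mem ℓ hv₁ hv₂ i k; exact pavrN_mem ℓ hv₁ hv₂ i j]
    have H := hopt rho0 rho0_nonneg rho0_pos_ae rho0_int int1 int2 p hmono hmem
    have hsplit : Finset.Icc i j = Finset.Icc i k ∪ Finset.Icc (k+1) j := by
      ext t; simp only [Finset.mem_Icc, Finset.mem_union]; omega
    have hdisj : Disjoint (Finset.Icc i k) (Finset.Icc (k+1) j) := by
      rw [Finset.disjoint_left]; intro a ha hb
      simp only [Finset.mem_Icc] at ha hb; omega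
    have e1 : (∑ t ∈ Finset.Icc i k, (if ℓ t then v₁ else v₂) * Crho rho0 (ℓ t) (p t))
        = ∑ t ∈ Finset.Icc i k, (if ℓ t then v₁ else v₂) * Crho rho0 (ℓ t) r1 :=
      Finset.sum_congr rfl fun t ht => by
        have h : t ≤ k := (Finset.mem_Icc.1 ht).2
        simp only [hp, h, if_true]
    have e2 : (∑ t ∈ Finset.Icc (k+1) j, (if ℓ t then v₁ else v₂) * Crho rho0 (ℓ t) (p t))
        = ∑ t ∈ Finset.Icc (k+1) j, (if ℓ t then v₁ else v₂) * Crho rho0 (ℓ t) r :=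
      Finset.sum_congr rfl fun t ht => by
        have h : ¬ t ≤ k := by have := (Finset.mem_Icc.1 ht).1; omega
        simp only [hp, h, if_false]
    rw [hsplit, Finset.sum_union hdisj, Finset.sum_union hdisj, e1, e2,
      seg_sum_const ℓ v₁ v₂ (Finset.Icc i k) r, seg_sum_const ℓ v₁ v₂ (Finset.Icc (k+1) j) r,
      seg_sum_const ℓ v₁ v₂ (Finset.Icc i k) r1] at H
    set m1 : ℕ := ((Finset.Icc i k).filter fun t => ℓ t = true).card with hm1
    set n1 : ℕ := ((Finset.Icc i k).filter fun t => ℓ t = false).card with hn1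
    have hcard : 1 ≤ m1 + n1 := by
      rw [hm1, hn1, card_split]
      exact Finset.card_pos.2 ⟨k, Finset.mem_Icc.2 ⟨hik, le_refl k⟩⟩
    have hD : (0:ℝ) < (m1:ℝ) * v₁ + (n1:ℝ) * v₂ := pos_comb hv₁ hv₂ m1 n1 hcard
    have hr1 : r1 * ((m1:ℝ) * v₁ + (n1:ℝ) * v₂) = (m1:ℝ) * v₁ := by
      rw [hr1def]
      show ((m1:ℝ) * v₁) / ((m1:ℝ) * v₁ + (n1:ℝ) * v₂) * ((m1:ℝ) * v₁ + (n1:ℝ) * v₂) = _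
      exact div_mul_cancel₀ _ (ne_of_gt hD)
    have hq := quad_id ((m1:ℝ) * v₁) ((n1:ℝ) * v₂) r r1 hr1
    have hpos : 0 < 3 * ((m1:ℝ) * v₁ + (n1:ℝ) * v₂) * (r - r1)^2 := by
      have h1 : 0 < r - r1 := sub_pos.2 hlt
      positivity
    linarith
  · -- r₂ := pavrN k j ≤ r
    rcases eq_or_lt_of_le hik with rfl | hik'
    · exact le_refl _
    by_contra hlt
    push_neg at hlt
    set r : ℝ := pavrN ℓ v₁ v₂ i j with hrdef
    set r2 : ℝ := pavrN ℓ v₁ v₂ k j with hr2def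
    set p : ℕ → ℝ := fun t => if t < k then r else r2 with hp
    have hmono : MonotoneOn p (Set.Icc i j) := by
      intro s _ t _ hst
      by_cases h1 : s < k <;> by_cases h2 : t < k <;>
        simp only [hp, h1, h2, if_true, if_false]
      · exact le_refl _
      · exact hlt.le
      · exact absurd (lt_of_le_of_lt hst h2) h1
      · exact le_refl _
    have hmem : ∀ t ∈ Set.Icc i j, p t ∈ Set.Icc (0:ℝ) 1 := by
      intro t _
      by_cases h : t < k <;> simp only [hp, h, if_true, if_false] <;>
        [exact pavrN_mem ℓ hv₁ hv₂ i j; exact pavrN_mem ℓ hv₁ hv₂ k j]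
    have H := hopt rho0 rho0_nonneg rho0_pos_ae rho0_int int1 int2 p hmono hmem
    have hsplit : Finset.Icc i j = Finset.Icc i (k-1) ∪ Finset.Icc k j := by
      ext t; simp only [Finset.mem_Icc, Finset.mem_union]; omega
    have hdisj : Disjoint (Finset.Icc i (k-1)) (Finset.Icc k j) := by
      rw [Finset.disjoint_left]; intro a ha hb
      simp only [Finset.mem_Icc] at ha hb; omega
    have e1 : (∑ t ∈ Finset.Icc i (k-1), (if ℓ t then v₁ else v₂) * Crho rho0 (ℓ t) (p t))
        = ∑ t ∈ Finset.Icc i (k-1), (if ℓ t then v₁ else v₂) * Crho rho0 (ℓ t) r :=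
      Finset.sum_congr rfl fun t ht => by
        have h : t < k := by have := (Finset.mem_Icc.1 ht).2; omega
        simp only [hp, h, if_true]
    have e2 : (∑ t ∈ Finset.Icc k j, (if ℓ t then v₁ else v₂) * Crho rho0 (ℓ t) (p t))
        = ∑ t ∈ Finset.Icc k j, (if ℓ t then v₁ else v₂) * Crho rho0 (ℓ t) r2 :=
      Finset.sum_congr rfl fun t ht => by
        have h : ¬ t < k := by have := (Finset.mem_Icc.1 ht).1; omega
        simp only [hp, h, if_false]
    rw [hsplit, Finset.sum_union hdisj, Finset.sum_union hdisj, e1, e2,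
      seg_sum_const ℓ v₁ v₂ (Finset.Icc i (k-1)) r, seg_sum_const ℓ v₁ v₂ (Finset.Icc k j) r,
      seg_sum_const ℓ v₁ v₂ (Finset.Icc k j) r2] at H
    set m2 : ℕ := ((Finset.Icc k j).filter fun t => ℓ t = true).card with hm2
    set n2 : ℕ := ((Finset.Icc k j).filter fun t => ℓ t = false).card with hn2
    have hcard : 1 ≤ m2 + n2 := by
      rw [hm2, hn2, card_split]
      exact Finset.card_pos.2 ⟨k, Finset.mem_Icc.2 ⟨le_refl k, hkj⟩⟩
    have hD : (0:ℝ) < (m2:ℝ) * v₁ + (n2:ℝ) * v₂ := pos_comb hv₁ hv₂ m2 n2 hcard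
    have hr2 : r2 * ((m2:ℝ) * v₁ + (n2:ℝ) * v₂) = (m2:ℝ) * v₁ := by
      rw [hr2def]
      show ((m2:ℝ) * v₁) / ((m2:ℝ) * v₁ + (n2:ℝ) * v₂) * ((m2:ℝ) * v₁ + (n2:ℝ) * v₂) = _
      exact div_mul_cancel₀ _ (ne_of_gt hD)
    have hq := quad_id ((m2:ℝ) * v₁) ((n2:ℝ) * v₂) r r2 hr2
    have hpos : 0 < 3 * ((m2:ℝ) * v₁ + (n2:ℝ) * v₂) * (r - r2)^2 := by
      have h1 : r - r2 < 0 := sub_neg.2 hlt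
      have h2 : 0 < (r - r2)^2 := by nlinarith
      have h3 : (0:ℝ) < 3 * ((m2:ℝ) * v₁ + (n2:ℝ) * v₂) := by linarith
      exact mul_pos h3 h2
    linarith
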